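/- Let f(z,w) ∈ ℂ[z,w] be a polynomial in two complex variables and let (z₀, w₀) ∈ ℂ² satisfy: f(z₀, w₀) = 0, (∂f/∂w)(z₀, w₀) = 0, (∂²f/∂w²)(z₀, w₀) ≠ 0, and (∂f/∂z)(z₀, w₀) ≠ 0 (a simple vertical tangent of the curve f = 0). Then there exist δ > 0 and a complex-analytic function w(t) on the ball {|t| < δ} with w(0) = w₀ and w'(0) ≠ 0 such that f(z₀ + t², w(t)) = 0 for all |t| < δ. -/

import Mathlib

open Polynomial Topology

noncomputable section Statement7Aux

namespace Statement7Aux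

/-- The substitution homomorphism `ℂ[s] →+* ℂ[v][t]` sending `s ↦ t²` and constants to
constants. -/
def A' : Polynomial ℂ →+* Polynomial (Polynomial ℂ) := eval₂RingHom (C.comp C) (X ^ 2)

lemma A'_decomp (c : Polynomial ℂ) :
    A' c = C (C (c.coeff 0)) + X ^ 2 * A' c.divX := by
  have h := congrArg (A' : Polynomial ℂ →+* Polynomial (Polynomial ℂ))
    (Polynomial.X_mul_divX_add c).symm
  rw [h, map_add, map_mul]
  have hX : A' X = X ^ 2 := by simp [A']
  have hC : ∀ a : ℂ, A' (C a) = C (C a) := by intro a; simp [A']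
  rw [hX, hC]; ring

lemma A'_coeff0 (c : Polynomial ℂ) : (A' c).coeff 0 = C (c.coeff 0) := by
  rw [A'_decomp c, coeff_add, mul_comm, Polynomial.coeff_mul_X_pow']
  simp

lemma A'_coeff1 (c : Polynomial ℂ) : (A' c).coeff 1 = 0 := by
  rw [A'_decomp c, coeff_add, mul_comm, Polynomial.coeff_mul_X_pow']
  simp [Polynomial.coeff_C]

lemma A'_coeff2 (c : Polynomial ℂ) : (A' c).coeff 2 = C (c.coeff 1) := by
  rw [A'_decomp c, coeff_add, mul_comm, Polynomial.coeff_mul_X_pow']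
  simp [Polynomial.coeff_C, A'_coeff0, Polynomial.coeff_divX]

lemma coeffP (g : Polynomial (Polynomial ℂ)) (n : ℕ) :
    (eval₂ A' (X * C X) g).coeff n
      = ∑ j ∈ Finset.range (n+1), (A' (g.coeff j)).coeff (n-j) * X ^ j := by
  classical
  have hterm : ∀ (c : Polynomial ℂ) (j : ℕ),
      (A' c * (X * C X) ^ j).coeff n
        = if j ≤ n then (A' c).coeff (n-j) * X ^ j else 0 := by
    intro c j
    have : A' c * (X * C X) ^ j = (A' c * C (X ^ j)) * X ^ j := by
      rw [mul_pow, ← C_pow]; ring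
    rw [this, Polynomial.coeff_mul_X_pow', Polynomial.coeff_mul_C]
  rw [Polynomial.eval₂_eq_sum, Polynomial.sum_def, Polynomial.finset_sum_coeff]
  calc ∑ j ∈ g.support, (A' (g.coeff j) * (X * C X) ^ j).coeff n
      = ∑ j ∈ g.support ∪ Finset.range (n+1),
          (A' (g.coeff j) * (X * C X) ^ j).coeff n := by
        apply Finset.sum_subset Finset.subset_union_left
        intro x _ hx
        rw [Polynomial.notMem_support_iff.mp hx]
        simp
    _ = ∑ j ∈ g.support ∪ Finset.range (n+1),
          (if j ≤ n then (A' (g.coeff j)).coeff (n-j) * X ^ j else 0) :=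
        Finset.sum_congr rfl (fun j _ => hterm (g.coeff j) j)
    _ = ∑ j ∈ Finset.range (n+1),
          (if j ≤ n then (A' (g.coeff j)).coeff (n-j) * X ^ j else 0) := by
        symm
        apply Finset.sum_subset Finset.subset_union_right
        intro x _ hx
        have hxn : ¬ x ≤ n := fun h => hx (Finset.mem_range.mpr (Nat.lt_succ_of_le h))
        simp [hxn]
    _ = ∑ j ∈ Finset.range (n+1), (A' (g.coeff j)).coeff (n-j) * X ^ j := by
        apply Finset.sum_congr rfl
        intro j hj
        simp [Nat.lt_succ_iff.mp (Finset.mem_range.mp hj)]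

lemma aux_analytic (q : Polynomial (Polynomial ℂ)) (p : ℂ × ℂ) :
    AnalyticAt ℂ (fun p : ℂ × ℂ => Polynomial.eval₂ (Polynomial.evalRingHom p.2) p.1 q) p := by
  induction q using Polynomial.induction_on' with
  | add a b ha hb => simpa [Polynomial.eval₂_add, Pi.add_def] using ha.add hb
  | monomial n c =>
      simp only [Polynomial.eval₂_monomial, Polynomial.coe_evalRingHom]
      have h1 : AnalyticAt ℂ (fun p : ℂ × ℂ => Polynomial.eval p.2 c) p := by
        have := (analyticAt_snd (p := p) (𝕜 := ℂ)).aeval_polynomial (A := ℂ) c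
        simpa only [Polynomial.coe_aeval_eq_eval] using this
      exact h1.mul (analyticAt_fst.pow n)

end Statement7Aux

end Statement7Aux

open Statement7Aux in
/-- local Puiseux parametrization at a simple vertical tangent.
Let `f(z,w) ∈ ℂ[z,w]` (as an element of `(ℂ[z])[w]`, with associated polynomial function
`F z w`) and `(z₀, w₀)` satisfy `F z₀ w₀ = 0`, `∂F/∂w (z₀,w₀) = 0`, `∂²F/∂w² (z₀,w₀) ≠ 0`
and `∂F/∂z (z₀,w₀) ≠ 0`.  Then there are `δ > 0` and an analytic function `w(t)` on
`{|t| < δ}` with `w(0) = w₀`, `w'(0) ≠ 0` and `F (z₀ + t²) (w t) = 0` for `|t| < δ`. -/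
theorem statement7 (f : Polynomial (Polynomial ℂ)) (z₀ w₀ : ℂ)
    (F : ℂ → ℂ → ℂ)
    (hF : ∀ z w : ℂ, F z w = Polynomial.eval w (f.map (Polynomial.evalRingHom z)))
    (h0 : F z₀ w₀ = 0)
    (hw : deriv (fun w => F z₀ w) w₀ = 0)
    (hww : deriv (deriv (fun w => F z₀ w)) w₀ ≠ 0)
    (hz : deriv (fun z => F z w₀) z₀ ≠ 0) :
    ∃ δ > (0 : ℝ), ∃ w : ℂ → ℂ,
      AnalyticOnNhd ℂ w (Metric.ball 0 δ) ∧
      w 0 = w₀ ∧ deriv w 0 ≠ 0 ∧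
      ∀ t ∈ Metric.ball (0 : ℂ) δ, F (z₀ + t ^ 2) (w t) = 0 := by
  classical
  have hFe : ∀ z w : ℂ, F z w = Polynomial.eval₂ (evalRingHom z) w f := by
    intro z w; rw [hF, Polynomial.eval_map]
  -- the Taylor shift of `f` at `(z₀, w₀)`
  set ftil : Polynomial (Polynomial ℂ) :=
    Polynomial.eval₂ (eval₂RingHom (C.comp C) (C X + C (C z₀))) (X + C (C w₀)) f with hftil
  have key1 : ∀ s u : ℂ, Polynomial.eval₂ (evalRingHom s) u ftil = F (z₀ + s) (w₀ + u) := by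
    intro s u
    rw [hftil]
    have h := Polynomial.hom_eval₂ f (eval₂RingHom (C.comp C) (C X + C (C z₀)))
        (eval₂RingHom (evalRingHom s) u) (X + C (C w₀))
    rw [coe_eval₂RingHom] at h
    rw [h]
    have hcomp : (eval₂RingHom (evalRingHom s) u).comp
        (eval₂RingHom (C.comp C) (C X + C (C z₀))) = evalRingHom (z₀ + s) := by
      apply Polynomial.ringHom_ext
      · intro a; simp
      · simp [add_comm]
    rw [hcomp, hFe]
    simp [add_comm]
  have hgen : ∀ (p : Polynomial ℂ) (c : ℂ),
      deriv (fun y => Polynomial.eval (y - c) p) = fun x => Polynomial.eval (x - c) (derivative p) := by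
    intro p c; funext x
    have h := ((p.hasDerivAt (x - c)).comp x ((hasDerivAt_id x).sub_const c)).deriv
    simpa [Function.comp_def] using h
  -- the slice in the `w`-direction
  set gtil : Polynomial ℂ := ftil.map (evalRingHom 0) with hgtil
  have hwslice : (fun w => F z₀ w) = fun w => Polynomial.eval (w - w₀) gtil := by
    funext w
    have := key1 0 (w - w₀)
    rw [hgtil, Polynomial.eval_map]
    rw [this]
    ring_nf
  have hg0 : gtil.coeff 0 = 0 := by
    rw [Polynomial.coeff_zero_eq_eval_zero, hgtil, Polynomial.eval_map]
    have := key1 0 0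
    rw [this]
    simpa using h0
  have hg1 : gtil.coeff 1 = 0 := by
    rw [hwslice, hgen] at hw
    have : (derivative gtil).coeff 0 = 0 := by
      rw [Polynomial.coeff_zero_eq_eval_zero]
      simpa using hw
    simpa [Polynomial.coeff_derivative] using this
  have hb : gtil.coeff 2 ≠ 0 := by
    rw [hwslice, hgen, hgen] at hww
    intro hb0
    apply hww
    have : (derivative (derivative gtil)).coeff 0 = 0 := by
      simp [Polynomial.coeff_derivative, hb0]
    rw [Polynomial.coeff_zero_eq_eval_zero] at this
    simpa using this
  -- the slice in the `z`-direction
  set etil : Polynomial ℂ := ftil.coeff 0 with hetil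
  have hzslice : (fun z => F z w₀) = fun z => Polynomial.eval (z - z₀) etil := by
    funext z
    have h := key1 (z - z₀) 0
    rw [Polynomial.eval₂_at_zero] at h
    rw [hetil]
    have h2 : Polynomial.eval (z - z₀) (ftil.coeff 0) = F (z₀ + (z - z₀)) (w₀ + 0) := h
    rw [h2]
    ring_nf
  have ha : etil.coeff 1 ≠ 0 := by
    rw [hzslice, hgen] at hz
    intro ha0
    apply hz
    have : (derivative etil).coeff 0 = 0 := by
      simp [Polynomial.coeff_derivative, ha0]
    rw [Polynomial.coeff_zero_eq_eval_zero] at this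
    simpa using this
  -- coefficients of the shifted polynomial
  have hcoeff_rel : ∀ j : ℕ, gtil.coeff j = (ftil.coeff j).coeff 0 := by
    intro j
    rw [hgtil, Polynomial.coeff_map, Polynomial.coeff_zero_eq_eval_zero]
    rfl
  set a : ℂ := (ftil.coeff 0).coeff 1 with hadef
  set b : ℂ := (ftil.coeff 2).coeff 0 with hbdef
  have ha' : a ≠ 0 := ha
  have hb' : b ≠ 0 := by rw [hbdef, ← hcoeff_rel]; exact hb
  -- the substituted polynomial  P = f(z₀ + t², w₀ + t·v)  in (ℂ[v])[t]
  set P : Polynomial (Polynomial ℂ) := Polynomial.eval₂ A' (X * C X) ftil with hPdef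
  have key2 : ∀ t v : ℂ,
      Polynomial.eval₂ (evalRingHom v) t P = F (z₀ + t^2) (w₀ + t*v) := by
    intro t v
    rw [hPdef]
    have h := Polynomial.hom_eval₂ ftil A' (eval₂RingHom (evalRingHom v) t) (X * C X)
    rw [coe_eval₂RingHom] at h
    rw [h]
    have hcomp : (eval₂RingHom (evalRingHom v) t).comp A' = evalRingHom (t^2) := by
      apply Polynomial.ringHom_ext
      · intro x; simp [A']
      · simp [A']
    have hW : Polynomial.eval₂ (evalRingHom v) t (X * C X) = t * v := by
      rw [Polynomial.eval₂_mul, Polynomial.eval₂_X, Polynomial.eval₂_C]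
      simp
    rw [hcomp, hW, key1]
  have hP0 : P.coeff 0 = 0 := by
    rw [hPdef, coeffP, Finset.sum_range_one, A'_coeff0, ← hcoeff_rel 0, hg0]
    simp
  have hP1 : P.coeff 1 = 0 := by
    rw [hPdef, coeffP, Finset.sum_range_succ, Finset.sum_range_one]
    rw [A'_coeff1, A'_coeff0, ← hcoeff_rel 1, hg1]
    simp
  have hP2 : P.coeff 2 = C a + C b * X^2 := by
    rw [hPdef, coeffP, Finset.sum_range_succ, Finset.sum_range_succ, Finset.sum_range_one]
    rw [A'_coeff2, A'_coeff1, A'_coeff0]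
    simp [hadef, hbdef]
  -- divide by t²
  set Q : Polynomial (Polynomial ℂ) := P.divX.divX with hQdef
  have hPQ : P = X^2 * Q := by
    have h1 : X * P.divX + C (P.coeff 0) = P := Polynomial.X_mul_divX_add P
    rw [hP0, map_zero, add_zero] at h1
    have h2 : X * Q + C (P.divX.coeff 0) = P.divX := Polynomial.X_mul_divX_add P.divX
    have h3 : P.divX.coeff 0 = 0 := by rw [Polynomial.coeff_divX]; exact hP1
    rw [h3, map_zero, add_zero] at h2
    rw [← h1, ← h2]; ring
  have hQ0 : Q.coeff 0 = P.coeff 2 := by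
    rw [hQdef, Polynomial.coeff_divX, Polynomial.coeff_divX]
  -- the analytic function G with t² G(t,v) = F(z₀+t², w₀+tv)
  set G : ℂ × ℂ → ℂ := fun p => Polynomial.eval₂ (evalRingHom p.2) p.1 Q with hGdef
  have hGanal : ∀ p, AnalyticAt ℂ G p := by rw [hGdef]; exact aux_analytic Q
  have keyG : ∀ t v : ℂ, t^2 * G (t, v) = F (z₀ + t^2) (w₀ + t*v) := by
    intro t v
    rw [← key2 t v, hPQ, Polynomial.eval₂_mul, Polynomial.eval₂_X_pow, hGdef]
  have hG0 : ∀ v : ℂ, G (0, v) = a + b * v^2 := by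
    intro v
    rw [hGdef]
    show Polynomial.eval₂ (evalRingHom v) 0 Q = a + b * v^2
    rw [Polynomial.eval₂_at_zero, hQ0, hP2]
    simp
  -- choice of v₀ with a + b v₀² = 0
  obtain ⟨v₀, hv₀⟩ : ∃ v₀ : ℂ, v₀ ^ 2 = -a/b :=
    IsAlgClosed.exists_pow_nat_eq (-a/b) (by norm_num)
  have hGv0 : G (0, v₀) = 0 := by
    rw [hG0, hv₀]
    field_simp
    ring
  have hv0ne : v₀ ≠ 0 := by
    intro h
    rw [h] at hv₀
    apply ha'
    have h2 : -a / b = 0 := by simpa using hv₀.symm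
    rcases div_eq_zero_iff.mp h2 with h3 | h3
    · simpa using h3
    · exact absurd h3 hb'
  -- derivative data of G at (0, v₀)
  have hGdiffAt : DifferentiableAt ℂ G (0, v₀) := (hGanal _).differentiableAt
  set L : (ℂ × ℂ) →L[ℂ] ℂ := fderiv ℂ G (0, v₀) with hLdef
  have hL : HasFDerivAt G L (0, v₀) := hGdiffAt.hasFDerivAt
  set d : ℂ := L (0, 1) with hddef
  set c : ℂ := L (1, 0) with hcdef
  have hcurve : HasDerivAt (fun v : ℂ => G (0, v)) d v₀ := by
    have hc : HasDerivAt (fun v : ℂ => (((0:ℂ), v) : ℂ × ℂ)) ((0:ℂ), (1:ℂ)) v₀ :=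
      (hasDerivAt_const v₀ (0:ℂ)).prodMk (hasDerivAt_id v₀)
    exact hL.comp_hasDerivAt v₀ hc
  have hpoly : HasDerivAt (fun v : ℂ => a + b * v ^ 2) (b * (2 * v₀)) v₀ := by
    have h := ((hasDerivAt_pow 2 v₀).const_mul b).const_add a
    simpa using h
  have hd : d = b * (2 * v₀) := by
    have heq : (fun v : ℂ => G (0, v)) = fun v : ℂ => a + b * v ^ 2 := funext hG0
    rw [heq] at hcurve
    exact hcurve.unique hpoly
  have hdne : d ≠ 0 := by
    rw [hd]
    exact mul_ne_zero hb' (mul_ne_zero two_ne_zero hv0ne)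
  have hLrepr : ∀ x y : ℂ, L (x, y) = x * c + y * d := by
    intro x y
    have hxy : ((x, y) : ℂ × ℂ) = x • ((1:ℂ), (0:ℂ)) + y • ((0:ℂ), (1:ℂ)) := by
      simp [Prod.ext_iff]
    rw [hxy, map_add, map_smul, map_smul, smul_eq_mul, smul_eq_mul, hcdef, hddef]
  -- the local diffeomorphism Φ(t,v) = (t, G(t,v))
  set Φ : ℂ × ℂ → ℂ × ℂ := fun p => (p.1, G p) with hΦdef
  set l1 : (ℂ × ℂ) →L[ℂ] (ℂ × ℂ) :=
    (ContinuousLinearMap.fst ℂ ℂ ℂ).prod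
      (c • ContinuousLinearMap.fst ℂ ℂ ℂ + d • ContinuousLinearMap.snd ℂ ℂ ℂ) with hl1def
  set l2 : (ℂ × ℂ) →L[ℂ] (ℂ × ℂ) :=
    (ContinuousLinearMap.fst ℂ ℂ ℂ).prod
      (d⁻¹ • (ContinuousLinearMap.snd ℂ ℂ ℂ - c • ContinuousLinearMap.fst ℂ ℂ ℂ)) with hl2def
  have hleft : Function.LeftInverse l2 l1 := by
    intro p
    rw [hl1def, hl2def]
    simp [Prod.ext_iff]
    field_simp
  have hright : Function.RightInverse l2 l1 := by
    intro p
    rw [hl1def, hl2def]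
    simp [Prod.ext_iff]
    field_simp
    ring
  set e : (ℂ × ℂ) ≃L[ℂ] (ℂ × ℂ) := ContinuousLinearEquiv.equivOfInverse l1 l2 hleft hright
    with hedef
  have hl1L : (ContinuousLinearMap.fst ℂ ℂ ℂ).prod L = l1 := by
    refine ContinuousLinearMap.ext fun p => Prod.ext ?_ ?_
    · simp [hl1def]
    · have h1 : ((ContinuousLinearMap.fst ℂ ℂ ℂ).prod L p).2 = L (p.1, p.2) := by
        simp
      rw [h1, hLrepr p.1 p.2, hl1def]
      simp
      ring
  have hΦderiv : HasFDerivAt Φ ((ContinuousLinearMap.fst ℂ ℂ ℂ).prod L) (0, v₀) := by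
    rw [hΦdef]
    exact (hasFDerivAt_fst).prodMk hL
  have hΦe : HasFDerivAt Φ (e : (ℂ × ℂ) →L[ℂ] (ℂ × ℂ)) (0, v₀) := by
    have : (e : (ℂ × ℂ) →L[ℂ] (ℂ × ℂ)) = l1 := rfl
    rw [this, ← hl1L]
    exact hΦderiv
  have hΦanal : AnalyticAt ℂ Φ (0, v₀) := by
    rw [hΦdef]
    exact analyticAt_fst.prod (hGanal _)
  have hΦcd : ContDiffAt ℂ 2 Φ (0, v₀) := hΦanal.contDiffAt
  have hn : (1 : WithTop ℕ∞) ≤ 2 := by norm_num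
  set Ψ : ℂ × ℂ → ℂ × ℂ := hΦcd.localInverse hΦe two_ne_zero with hΨdef
  have hΦv₀ : Φ (0, v₀) = ((0:ℂ), (0:ℂ)) := by
    rw [hΦdef]
    simp [hGv0]
  have hΨ0 : Ψ ((0:ℂ), (0:ℂ)) = ((0:ℂ), v₀) := by
    rw [hΨdef, ← hΦv₀]
    exact hΦcd.localInverse_apply_image hΦe two_ne_zero
  have hΨcd : ContDiffAt ℂ 2 Ψ ((0:ℂ), (0:ℂ)) := by
    rw [hΨdef]
    have h := hΦcd.to_localInverse hΦe two_ne_zero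
    rwa [hΦv₀] at h
  have hrt : ∀ᶠ q in 𝓝 (((0:ℂ), (0:ℂ)) : ℂ × ℂ), Φ (Ψ q) = q := by
    rw [hΨdef]
    have h := (hΦcd.hasStrictFDerivAt' hΦe two_ne_zero).eventually_right_inverse
    rwa [hΦv₀] at h
  obtain ⟨u, hu, hΨcdOn⟩ := hΨcd.contDiffOn hn (by intro h; simp at h)
  have hΨdOn : DifferentiableOn ℂ Ψ u := hΨcdOn.differentiableOn one_ne_zero
  have hU : u ∩ {q : ℂ × ℂ | Φ (Ψ q) = q} ∈ 𝓝 (((0:ℂ), (0:ℂ)) : ℂ × ℂ) :=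
    Filter.inter_mem hu hrt
  obtain ⟨δ, hδpos, hball⟩ := Metric.mem_nhds_iff.mp hU
  have hmem : ∀ t : ℂ, t ∈ Metric.ball (0:ℂ) δ →
      ((t, (0:ℂ)) : ℂ × ℂ) ∈ Metric.ball (((0:ℂ), (0:ℂ)) : ℂ × ℂ) δ := by
    intro t ht
    rw [Metric.mem_ball] at ht ⊢
    have hdd : dist ((t, (0:ℂ)) : ℂ × ℂ) (((0:ℂ), (0:ℂ)) : ℂ × ℂ) = dist t 0 := by
      rw [Prod.dist_eq]
      simp
    rwa [hdd]
  set v : ℂ → ℂ := fun t => (Ψ (t, 0)).2 with hvdef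
  have hrtt : ∀ t ∈ Metric.ball (0:ℂ) δ, Φ (Ψ (t, 0)) = (t, 0) :=
    fun t ht => (hball (hmem t ht)).2
  have hvdiff : DifferentiableOn ℂ v (Metric.ball (0:ℂ) δ) := by
    intro t ht
    have hsub : Metric.ball (((0:ℂ), (0:ℂ)) : ℂ × ℂ) δ ⊆ u := fun q hq => (hball hq).1
    have h1 : DifferentiableWithinAt ℂ Ψ (Metric.ball (((0:ℂ), (0:ℂ)) : ℂ × ℂ) δ) (t, 0) :=
      (hΨdOn.mono hsub) _ (hmem t ht)
    have h2 : DifferentiableWithinAt ℂ (fun s : ℂ => ((s, (0:ℂ)) : ℂ × ℂ))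
        (Metric.ball (0:ℂ) δ) t :=
      (differentiableAt_id.prodMk (differentiableAt_const _)).differentiableWithinAt
    have h3 := h1.comp t h2 (fun x hx => hmem x hx)
    have h4 := (differentiableAt_snd).comp_differentiableWithinAt t h3
    exact h4
  refine ⟨δ, hδpos, (fun t => w₀ + t * v t), ?_, ?_, ?_, ?_⟩
  · have hwd : DifferentiableOn ℂ (fun t => w₀ + t * v t) (Metric.ball (0:ℂ) δ) :=
      (differentiableOn_const _).add (differentiableOn_id.mul hvdiff)
    exact hwd.analyticOnNhd Metric.isOpen_ball
  · simp
  · have h0mem : (0:ℂ) ∈ Metric.ball (0:ℂ) δ := Metric.mem_ball_self hδpos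
    have hv0 : v 0 = v₀ := by
      rw [hvdef]
      show (Ψ ((0:ℂ), (0:ℂ))).2 = v₀
      rw [hΨ0]
    have hvat : DifferentiableAt ℂ v 0 :=
      (hvdiff 0 h0mem).differentiableAt (Metric.isOpen_ball.mem_nhds h0mem)
    have hder : HasDerivAt (fun t => w₀ + t * v t) (1 * v 0 + 0 * deriv v 0) 0 := by
      have h := (hasDerivAt_id' (x := (0:ℂ))).mul hvat.hasDerivAt
      simpa using h.const_add w₀
    rw [hder.deriv]
    simp [hv0, hv0ne]
  · intro t ht
    have h1 := hrtt t ht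
    have hfst : (Ψ (t, 0)).1 = t := congrArg Prod.fst h1
    have hsnd : G (Ψ (t, 0)) = 0 := by
      have h2 := congrArg Prod.snd h1
      rw [hΦdef] at h2
      simpa using h2
    have hpair : Ψ (t, 0) = (t, v t) := by
      rw [hvdef]
      exact Prod.ext hfst rfl
    rw [hpair] at hsnd
    have h3 := keyG t (v t)
    rw [hsnd, mul_zero] at h3
    exact h3.symm
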